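/- arXiv:1406.7571 — 2 statements merged into one kernel-verified Lean document; each statement's English description precedes it below -/
import Mathlib

section
/- If a finite sequence of positive integers is not symmetric (not equal to its reversal), then its anticontinuant is nonzero. -/
/-- The continuant of a finite sequence of integers. -/
def cont : List ℤ → ℤ
  | [] => 1
  | [a] => a
  | a :: b :: l => a * cont (b :: l) + cont l


/-- The anticontinuant `[q₀,…,q_{s-1}]* = [q₀,…,q_{s-2}] − [q₁,…,q_{s-1}]`. -/
def anticont (l : List ℤ) : ℤ := cont l.dropLast - cont l.tail

lemma cont_pos : ∀ (l : List ℤ), (∀ q ∈ l, 0 < q) → 0 < cont l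
  | [], _ => by simp [cont]
  | [a], h => by simpa [cont] using h a (by simp)
  | a :: b :: t, h => by
    have h1 := cont_pos (b :: t) (fun q hq => h q (by simp at hq ⊢; tauto))
    have h2 := cont_pos t (fun q hq => h q (by simp [hq]))
    have ha := h a (by simp)
    simp only [cont]
    nlinarith

lemma cont_concat : ∀ (l : List ℤ) (c b : ℤ),
    cont ((c :: l) ++ [b]) = b * cont (c :: l) + cont ((c :: l).dropLast)
  | [], c, b => by simp [cont]; ring
  | [d], c, b => by simp [cont]; ring
  | d :: e :: rest, c, b => by
    have h1 := cont_concat (e :: rest) d b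
    have h2 := cont_concat rest e b
    cases rest with
    | nil => simp_all [cont]; ring
    | cons f rest' =>
      simp only [cont, List.cons_append, List.dropLast_cons₂] at h1 h2 ⊢
      rw [h1, h2]
      ring

lemma cont_tail_le (l : List ℤ) (hl : ∀ q ∈ l, 0 < q) : cont l.tail ≤ cont l := by
  match l with
  | [] => simp
  | [a] => have := hl a (by simp); simp [cont]; omega
  | a :: b :: t =>
    have h1 := cont_pos (b :: t) (fun q hq => hl q (by simp at hq ⊢; tauto))
    have h2 := cont_pos t (fun q hq => hl q (by simp [hq]))
    have ha := hl a (by simp)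
    simp only [cont, List.tail_cons]
    nlinarith

lemma cont_dropLast_le (l : List ℤ) (hl : ∀ q ∈ l, 0 < q) : cont l.dropLast ≤ cont l := by
  match l with
  | [] => simp
  | [a] => have := hl a (by simp); simp [cont]; omega
  | a :: b :: t =>
    obtain ⟨m, c, hm⟩ : ∃ m c, b :: t = m ++ [c] := by
      refine ⟨(b :: t).dropLast, (b :: t).getLast (by simp), ?_⟩
      exact (List.dropLast_append_getLast (by simp)).symm
    have hrw : a :: b :: t = (a :: m) ++ [c] := by simp [hm]
    rw [hrw, List.dropLast_concat]
    have hcc := cont_concat m a c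
    have hpos : ∀ q ∈ a :: m, 0 < q := by
      intro q hq
      apply hl
      rw [hrw]
      simp at hq ⊢; tauto
    have hc : 0 < c := by
      apply hl; rw [hrw]; simp
    have h1 := cont_pos (a :: m) hpos
    have h2 := cont_pos ((a :: m).dropLast) (fun q hq => hpos q (List.dropLast_subset _ hq))
    have h3 : cont (a :: m) ≤ c * cont (a :: m) := le_mul_of_one_le_left h1.le (by omega)
    rw [hcc]
    linarith

lemma abs_anticont_lt (l : List ℤ) (hl : ∀ q ∈ l, 0 < q) :
    |anticont l| < cont l := by
  have h1 : cont l.tail ≤ cont l := cont_tail_le l hl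
  have h2 : cont l.dropLast ≤ cont l := cont_dropLast_le l hl
  have h3 : 0 < cont l.tail := cont_pos _ (fun q hq => hl q (List.tail_subset _ hq))
  have h4 : 0 < cont l.dropLast := cont_pos _ (fun q hq => hl q (List.dropLast_subset _ hq))
  rw [abs_lt]
  constructor <;> simp only [anticont] <;> omega

lemma anticont_aux : ∀ n : ℕ, ∀ l : List ℤ, l.length ≤ n → (∀ q ∈ l, 0 < q) →
    l.reverse ≠ l → anticont l ≠ 0 := by
  intro n
  induction n with
  | zero =>
    intro l hn _ h
    rw [List.length_eq_zero_iff.mp (Nat.le_zero.mp hn)] at h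
    simp at h
  | succ n ih =>
    intro l hn hl h
    match l with
    | [] => simp at h
    | [a] => simp at h
    | a :: b :: t =>
      obtain ⟨m, c, hm⟩ : ∃ m c, b :: t = m ++ [c] := by
        refine ⟨(b :: t).dropLast, (b :: t).getLast (by simp), ?_⟩
        exact (List.dropLast_append_getLast (by simp)).symm
      have hrw : a :: b :: t = (a :: m) ++ [c] := by simp [hm]
      rw [hrw] at h hl ⊢
      have hlen : m.length + 2 ≤ n + 1 := by
        have h2 := congrArg List.length hm
        simp at h2 hn
        omega
      have ha : 0 < a := hl a (by simp)
      have hc : 0 < c := hl c (by simp)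
      have hmpos : ∀ q ∈ m, 0 < q := fun q hq => hl q (by simp [hq])
      have hdl : ((a :: m) ++ [c] : List ℤ).dropLast = a :: m := List.dropLast_concat ..
      have htl : ((a :: m) ++ [c] : List ℤ).tail = m ++ [c] := by simp
      have key : anticont ((a :: m) ++ [c]) = (a - c) * cont m - anticont m := by
        rw [anticont, hdl, htl]
        cases m with
        | nil => simp [cont, anticont]
        | cons d m' =>
          have h1 := cont_concat m' d c
          rw [show d :: m' ++ [c] = (d :: m') ++ [c] from rfl, h1]
          simp only [cont, anticont, List.tail_cons, List.dropLast_cons₂]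
          ring
      by_cases hac : a = c
      · subst hac
        rw [key]
        simp only [sub_self, zero_mul, zero_sub, ne_eq, neg_eq_zero]
        apply ih m (by omega) hmpos
        intro hmm
        apply h
        simp [hmm]
      · rw [key]
        intro h0
        have heq : (a - c) * cont m = anticont m := by linarith
        have hcm : 0 < cont m := cont_pos m hmpos
        have hb := abs_anticont_lt m hmpos
        rw [← heq, abs_mul, abs_of_pos hcm] at hb
        have h1 : 1 ≤ |a - c| := Int.one_le_abs (sub_ne_zero.mpr hac)
        nlinarith

/-- An asymmetric sequence of positive integers has nonzero anticontinuant. -/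
theorem anticont_ne_zero_of_not_symm (l : List ℤ) (hl : ∀ q ∈ l, 0 < q)
    (h : l.reverse ≠ l) : anticont l ≠ 0 :=
  anticont_aux l.length l le_rfl hl h
end

section
/- Let c ≥ 1, q ≥ 1, and x_0, ..., x_{λ-1} be positive integers. Then [q+c, x_0, ..., x_{λ-1}, q]* ≥ c·F_{λ+1}, where F_{λ+1} is the (λ+1)-st Fibonacci number (F_1 = F_2 = 1). -/
lemma cont_cons_cons (a b : ℤ) (l : List ℤ) :
    cont (a :: b :: l) = a * cont (b :: l) + cont l := rfl

lemma cont_cons (a : ℤ) (l : List ℤ) (h : l ≠ []) :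
    cont (a :: l) = a * cont l + cont l.tail := by
  cases l with
  | nil => exact absurd rfl h
  | cons b l => rfl

lemma cont_append_singleton : ∀ (l : List ℤ) (q : ℤ), l ≠ [] →
    cont (l ++ [q]) = q * cont l + cont l.dropLast
  | [x0], q, _ => by simp [cont]; ring
  | x0 :: x1 :: l, q, _ => by
    rcases l with _ | ⟨y, l2⟩
    · simp [cont]; ring
    · have h1 := cont_append_singleton (x1 :: y :: l2) q (by simp)
      have h2 := cont_append_singleton (y :: l2) q (by simp)
      simp only [List.cons_append] at h1 h2 ⊢
      rw [cont_cons_cons, h1, h2]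
      simp only [List.dropLast, cont_cons_cons]
      ring

lemma fib_le_cont : ∀ (l : List ℤ), (∀ a ∈ l, 0 < a) →
    (Nat.fib (l.length + 1) : ℤ) ≤ cont l
  | [], _ => by simp [cont]
  | [a], h => by
    have := h a (by simp)
    simp [cont]; omega
  | a :: b :: l, h => by
    have h1 := fib_le_cont (b :: l) (fun t ht => h t (by simp [ht]))
    have h2 := fib_le_cont l (fun t ht => h t (by simp [ht]))
    have ha : 1 ≤ a := h a (by simp)
    have hpos : (0 : ℤ) < cont (b :: l) :=
      lt_of_lt_of_le (by exact_mod_cast Nat.fib_pos.mpr (by omega)) h1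
    rw [cont_cons_cons]
    have hlen : (a :: b :: l).length + 1 = l.length + 1 + 2 := by simp
    rw [hlen, Nat.fib_add_two]
    push_cast
    simp only [List.length_cons] at h1
    nlinarith [mul_nonneg (by linarith : (0:ℤ) ≤ a - 1) (le_of_lt hpos)]

lemma cont_pos_s9 (l : List ℤ) (h : ∀ a ∈ l, 0 < a) : 0 < cont l := by
  have := fib_le_cont l h
  have : (0 : ℤ) < (Nat.fib (l.length + 1) : ℤ) := by
    exact_mod_cast Nat.fib_pos.mpr (by omega)
  linarith [fib_le_cont l h]

/-- `[q+c, x₀,…,x_{λ-1}, q]* ≥ c·F_{λ+1}`. -/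
theorem anticont_ge_fib (q c : ℤ) (hq : 1 ≤ q) (hc : 1 ≤ c)
    (x : List ℤ) (hxpos : ∀ a ∈ x, 0 < a) :
    c * (Nat.fib (x.length + 1) : ℤ) ≤ anticont ((q + c) :: (x ++ [q])) := by
  have hdl : ((q + c) :: (x ++ [q])).dropLast = (q + c) :: x := by
    rw [show (q + c) :: (x ++ [q]) = ((q + c) :: x) ++ [q] by simp,
      List.dropLast_concat]
  unfold anticont
  rw [hdl]
  simp only [List.tail_cons]
  rcases x with _ | ⟨x0, x'⟩
  · simp [cont]
  rcases x'.eq_nil_or_concat with h | ⟨y, b, rfl⟩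
  · subst h
    simp only [List.length_cons, List.length_nil, List.cons_append, List.nil_append]
    have hx0 : 1 ≤ x0 := hxpos x0 (by simp)
    rw [cont_cons_cons, cont_cons_cons]
    simp only [cont]
    show c * ((Nat.fib 2 : ℕ) : ℤ) ≤ _
    rw [Nat.fib_two]
    push_cast
    nlinarith
  · -- x = x0 :: y ++ [b]
    simp only [List.concat_eq_append] at hxpos ⊢
    set d : List ℤ := x0 :: y with hd
    have hxd : x0 :: (y ++ [b]) = d ++ [b] := by simp [hd]
    have hbpos : 1 ≤ b := hxpos b (by simp)
    have hdpos : ∀ a ∈ d, 0 < a := by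
      intro a ha
      apply hxpos
      simp [hd] at ha ⊢
      tauto
    have hdlpos : ∀ a ∈ d.dropLast, 0 < a := fun a ha =>
      hdpos a (List.dropLast_subset d ha)
    have hypos : ∀ a ∈ y ++ [b], 0 < a := by
      intro a ha
      apply hxpos
      simp at ha ⊢
      tauto
    -- key continuant identities
    have hx_eq : cont (d ++ [b]) = b * cont d + cont d.dropLast :=
      cont_append_singleton d b (by simp [hd])
    have hleft : cont ((q + c) :: (d ++ [b])) =
        (q + c) * cont (d ++ [b]) + cont (y ++ [b]) := by
      rw [cont_cons (q + c) (d ++ [b]) (by simp [hd])]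
      simp [hd]
    have hright : cont ((d ++ [b]) ++ [q]) = q * cont (d ++ [b]) + cont d := by
      rw [cont_append_singleton (d ++ [b]) q (by simp [hd]),
        List.dropLast_concat]
    -- fibonacci bounds
    have hdbpos : ∀ a ∈ d ++ [b], 0 < a := by
      intro a ha
      rcases List.mem_append.mp ha with h | h
      · exact hdpos a h
      · simp at h; omega
    have hA : (Nat.fib ((d ++ [b]).length + 1) : ℤ) ≤ cont (d ++ [b]) :=
      fib_le_cont _ hdbpos
    have hB : (Nat.fib ((y ++ [b]).length + 1) : ℤ) ≤ cont (y ++ [b]) :=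
      fib_le_cont _ hypos
    have hC : (Nat.fib (d.dropLast.length + 1) : ℤ) ≤ cont d.dropLast :=
      fib_le_cont _ hdlpos
    have hD : 0 < cont d := cont_pos_s9 d hdpos
    -- lengths
    have hld : d.length = y.length + 1 := by simp [hd]
    have hldl : d.dropLast.length = y.length := by
      rw [List.length_dropLast, hld]; omega
    have hlx : (d ++ [b]).length = y.length + 2 := by simp [hld]
    have hly : (y ++ [b]).length = y.length + 1 := by simp
    rw [hlx] at hA; rw [hly] at hB; rw [hldl] at hC
    rw [hxd, hleft, hright, hlx,
      show y.length + 2 + 1 = y.length + 1 + 2 by omega, Nat.fib_add_two]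
    rw [show y.length + 2 + 1 = y.length + 1 + 2 by omega, Nat.fib_add_two] at hA
    push_cast at hA hB hC ⊢
    nlinarith [mul_nonneg (by linarith : (0:ℤ) ≤ c - 1)
        (by linarith : (0:ℤ) ≤ cont (d ++ [b]) -
          ((Nat.fib (y.length + 1) : ℤ) + (Nat.fib (y.length + 1 + 1) : ℤ))),
      mul_nonneg (by linarith : (0:ℤ) ≤ b - 1) (le_of_lt hD)]
end
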